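/- Let k be a field, R = k[x_0,…,x_{n-1}], f_0,…,f_{m-1} ∈ R forms of degree d with k(f_0,…,f_{m-1}) = k(x_0^d, x_1/x_0,…,x_{n-1}/x_0), and let g = g_ℓ x_n^{d−ℓ} + g_{ℓ+1} x_n^{d−ℓ−1} + ⋯ + g_{d−1} x_n + g_d ∈ R[x_n] be a form of degree d with g_j ∈ R homogeneous of degree j and g_ℓ ≠ 0 (so deg_{x_n}(g) = d−ℓ), ℓ ≤ d−1. Then the element x_n/x_0 of k(x_0,…,x_n) is algebraic of degree at most d−ℓ over the subfield k(f_0,…,f_{m-1}, g). -/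

import Mathlib

open MvPolynomial

set_option synthInstance.maxHeartbeats 1000000
set_option maxHeartbeats 1000000

/-- The rational function field `k(x_0,…,x_n)`. -/
abbrev RatFuncField (k : Type*) [Field k] (n : ℕ) : Type _ :=
  FractionRing (MvPolynomial (Fin (n + 1)) k)

/-- A polynomial in `x_0,…,x_n` viewed inside `k(x_0,…,x_n)`. -/
noncomputable def toF {k : Type*} [Field k] {n : ℕ} (p : MvPolynomial (Fin (n + 1)) k) :
    RatFuncField k n :=
  algebraMap (MvPolynomial (Fin (n + 1)) k) (RatFuncField k n) p

/-- The variable `x_i` viewed inside `k(x_0,…,x_n)`. -/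
noncomputable def xv {k : Type*} [Field k] {n : ℕ} (i : Fin (n + 1)) : RatFuncField k n :=
  toF (X i)

/-- Evaluating a homogeneous polynomial at a scaled point. -/
lemma aeval_homog {k A : Type*} [CommSemiring k] [CommSemiring A] [Algebra k A] {σ : Type*}
    {p : MvPolynomial σ k} {j : ℕ} (hp : p.IsHomogeneous j) (c : A) (v : σ → A) :
    aeval (fun i => c * v i) p = c ^ j * aeval v p := by
  conv_lhs => rw [p.as_sum]
  conv_rhs => rw [p.as_sum]
  rw [map_sum, map_sum, Finset.mul_sum]
  refine Finset.sum_congr rfl fun α hα => ?_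
  have hdeg : ∑ i ∈ α.support, α i = j := by
    have := hp (mem_support_iff.mp hα)
    simpa [Finsupp.weight_apply, Finsupp.sum] using this
  rw [aeval_monomial, aeval_monomial]
  have : (α.prod fun i e => (c * v i) ^ e) = c ^ j * α.prod fun i e => v i ^ e := by
    rw [Finsupp.prod, Finsupp.prod]
    simp_rw [mul_pow]
    rw [Finset.prod_mul_distrib, Finset.prod_pow_eq_pow_sum, hdeg]
  rw [this]; ring

lemma toF_rename_eq {k : Type*} [Field k] {n : ℕ} (q : MvPolynomial (Fin n) k) :
    toF (rename Fin.castSucc q) = aeval (fun i => (xv (Fin.castSucc i) : RatFuncField k n)) q := by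
  have h : (IsScalarTower.toAlgHom k (MvPolynomial (Fin (n+1)) k)
        (RatFuncField k n)).comp (rename (R := k) Fin.castSucc)
      = aeval (fun i => (xv (Fin.castSucc i) : RatFuncField k n)) := by
    apply algHom_ext
    intro i
    simp [xv, toF]
  exact DFunLike.congr_fun h q

lemma xv_ne_zero {k : Type*} [Field k] {n : ℕ} (i : Fin (n + 1)) :
    (xv i : RatFuncField k n) ≠ 0 := by
  simp only [xv, toF, ne_eq, map_eq_zero_iff _ (IsFractionRing.injective _ _)]
  exact X_ne_zero i

lemma algebraMap_aeval_eq {k : Type*} [Field k] {n : ℕ}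
    (K : IntermediateField k (RatFuncField k n))
    (w : Fin n → K) (q : MvPolynomial (Fin n) k) :
    (algebraMap K (RatFuncField k n)) (aeval w q)
      = aeval (fun i => (w i : RatFuncField k n)) q :=
  MvPolynomial.comp_aeval_apply (f := w) (K.val) q

/-- if forms `f_0,…,f_{m-1}` of degree `d` in `k[x_0,…,x_{n-1}]` define a
birational map onto the image, and
`g = g_ℓ x_n^{d−ℓ} + g_{ℓ+1} x_n^{d−ℓ−1} + ⋯ + g_d` with `g_j` homogeneous of degree `j`
and `g_ℓ ≠ 0`, `ℓ ≤ d − 1`, then `x_n/x_0` is algebraic of degree at most `d − ℓ` over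
`k(f_0,…,f_{m-1},g)`. -/
theorem monoid_extension_topological_degree
    {k : Type*} [Field k] {n m d ℓ : ℕ} (hn : 1 ≤ n) (hd : 1 ≤ d) (hℓ : ℓ ≤ d - 1)
    (f : Fin m → MvPolynomial (Fin n) k)
    (hf : ∀ j, (f j).IsHomogeneous d)
    (hbir : IntermediateField.adjoin k
        (Set.range fun j => toF (rename Fin.castSucc (f j) : MvPolynomial (Fin (n + 1)) k)) =
      IntermediateField.adjoin k
        (insert ((xv 0 : RatFuncField k n) ^ d)
          {y : RatFuncField k n | ∃ i : Fin n, i.castSucc ≠ 0 ∧ y = xv i.castSucc / xv 0}))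
    (G : ℕ → MvPolynomial (Fin n) k)
    (hG : ∀ j, (G j).IsHomogeneous j) (hGℓ : G ℓ ≠ 0) :
    ∃ p : Polynomial (IntermediateField.adjoin k
        ((Set.range fun j => toF (rename Fin.castSucc (f j) : MvPolynomial (Fin (n + 1)) k)) ∪
          {toF (∑ j ∈ Finset.Icc ℓ d,
            (rename Fin.castSucc (G j)) * X (Fin.last n) ^ (d - j))})),
      p ≠ 0 ∧ p.natDegree ≤ d - ℓ ∧
        Polynomial.aeval ((xv (Fin.last n) : RatFuncField k n) / xv 0) p = 0 := by
  classical
  have hℓd : ℓ < d := by omega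
  set L := RatFuncField k n with hL
  set gpoly : MvPolynomial (Fin (n + 1)) k :=
    ∑ j ∈ Finset.Icc ℓ d, (rename Fin.castSucc (G j)) * X (Fin.last n) ^ (d - j) with hgpoly
  set K := IntermediateField.adjoin k
      ((Set.range fun j => toF (rename Fin.castSucc (f j) : MvPolynomial (Fin (n + 1)) k)) ∪
        {toF gpoly}) with hKdef
  have hx0 : (xv 0 : L) ≠ 0 := xv_ne_zero 0
  have h1 : IntermediateField.adjoin k
      (Set.range fun j => toF (rename Fin.castSucc (f j) : MvPolynomial (Fin (n + 1)) k)) ≤ K :=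
    IntermediateField.adjoin.mono _ _ _ Set.subset_union_left
  have hx0d : (xv 0 : L) ^ d ∈ K := by
    apply h1
    rw [hbir]
    exact IntermediateField.subset_adjoin _ _ (Set.mem_insert _ _)
  have hratio : ∀ i : Fin n, (xv (Fin.castSucc i) : L) / xv 0 ∈ K := by
    intro i
    by_cases h : (Fin.castSucc i : Fin (n + 1)) = 0
    · rw [h, div_self hx0]; exact one_mem K
    · apply h1
      rw [hbir]
      exact IntermediateField.subset_adjoin _ _ (Set.mem_insert_iff.mpr (Or.inr ⟨i, h, rfl⟩))
  have hgK : toF gpoly ∈ K :=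
    IntermediateField.subset_adjoin _ _ (Set.mem_union_right _ rfl)
  set w : Fin n → K := fun i => ⟨xv i.castSucc / xv 0, hratio i⟩ with hw
  set cK : ℕ → K := fun j => aeval w (G j) with hcKdef
  have hcK : ∀ j, (cK j : L) = aeval (fun i => (xv (Fin.castSucc i) : L) / xv 0) (G j) := by
    intro j
    exact algebraMap_aeval_eq K w (G j)
  have hkey : ∀ j, toF (rename Fin.castSucc (G j)) = xv 0 ^ j * (cK j : L) := by
    intro j
    rw [toF_rename_eq, hcK]
    have h2 := aeval_homog (hG j) (xv 0 : L) (fun i => xv i.castSucc / xv 0)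
    have h3 : (fun i : Fin n => (xv 0 : L) * (xv i.castSucc / xv 0))
        = fun i : Fin n => (xv (Fin.castSucc i) : L) := by
      funext i; rw [mul_comm, div_mul_cancel₀ _ hx0]
    rw [h3] at h2
    exact h2
  have hcℓ : cK ℓ ≠ 0 := by
    intro h0
    apply hGℓ
    have h2 : toF (rename Fin.castSucc (G ℓ)) = 0 := by
      rw [hkey ℓ, h0]; simp
    have h3 : (rename (Fin.castSucc) (G ℓ) : MvPolynomial (Fin (n + 1)) k) = 0 := by
      exact (map_eq_zero_iff _ (IsFractionRing.injective _ _)).mp h2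
    exact (rename_injective Fin.castSucc (Fin.castSucc_injective n)) (by simpa using h3)
  have huK : ((xv 0 : L) ^ d)⁻¹ * toF gpoly ∈ K := mul_mem (inv_mem hx0d) hgK
  refine ⟨(∑ j ∈ Finset.Icc ℓ d, Polynomial.C (cK j) * Polynomial.X ^ (d - j)) -
      Polynomial.C (⟨((xv 0 : L) ^ d)⁻¹ * toF gpoly, huK⟩ : K), ?_, ?_, ?_⟩
  · -- nonzero: coefficient at d - ℓ is cK ℓ ≠ 0
    have hcoeff : ((∑ j ∈ Finset.Icc ℓ d, Polynomial.C (cK j) * Polynomial.X ^ (d - j)) -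
        Polynomial.C (⟨((xv 0 : L) ^ d)⁻¹ * toF gpoly, huK⟩ : K)).coeff (d - ℓ) = cK ℓ := by
      rw [Polynomial.coeff_sub, Polynomial.finset_sum_coeff,
        Polynomial.coeff_C, if_neg (by omega : ¬ d - ℓ = 0), sub_zero]
      rw [Finset.sum_eq_single ℓ]
      · simp [Polynomial.coeff_C_mul, Polynomial.coeff_X_pow]
      · intro j hj hne
        rw [Polynomial.coeff_C_mul, Polynomial.coeff_X_pow, if_neg, mul_zero]
        rw [Finset.mem_Icc] at hj
        omega
      · intro h
        exact absurd (Finset.mem_Icc.mpr ⟨le_refl ℓ, le_of_lt hℓd⟩) h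
    intro hp0
    apply hcℓ
    rw [← hcoeff, hp0, Polynomial.coeff_zero]
  · -- degree bound
    refine le_trans (Polynomial.natDegree_sub_le _ _) (max_le ?_ ?_)
    · apply Polynomial.natDegree_sum_le_of_forall_le
      intro j hj
      refine le_trans (Polynomial.natDegree_C_mul_le _ _) ?_
      rw [Polynomial.natDegree_X_pow]
      rw [Finset.mem_Icc] at hj
      omega
    · simp
  · -- root
    rw [map_sub, map_sum]
    simp only [map_mul, map_pow, Polynomial.aeval_C, Polynomial.aeval_X]
    rw [sub_eq_zero]
    have hmap : ∀ x : K, (algebraMap K L) x = (x : L) := fun x => rfl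
    simp only [IntermediateField.algebraMap_apply]
    have expand : toF gpoly
        = ∑ j ∈ Finset.Icc ℓ d, (xv 0 ^ j * (cK j : L)) * (xv (Fin.last n) : L) ^ (d - j) := by
      rw [hgpoly]
      simp only [toF, map_sum, map_mul, map_pow]
      refine Finset.sum_congr rfl fun j _ => ?_
      rw [← hkey j]
      rfl
    rw [expand, Finset.mul_sum]
    refine Finset.sum_congr rfl fun j hj => ?_
    rw [Finset.mem_Icc] at hj
    have hpow : (xv 0 : L) ^ d = xv 0 ^ j * xv 0 ^ (d - j) := by
      rw [← pow_add]; congr 1; omega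
    rw [div_pow, hpow]
    have hx0j : (xv 0 : L) ^ j ≠ 0 := pow_ne_zero _ hx0
    have hx0dj : (xv 0 : L) ^ (d - j) ≠ 0 := pow_ne_zero _ hx0
    field_simp
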